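/- Let β > 1, set γ := arcsin(1/β), and let 0 < θ₀ < π − 2γ. If x, y ∈ ℝ² \ {0} are distinct points with dist(0,x) ≤ dist(0,y) and the angle ∠x0y at the origin between x and y is at most θ₀, then the angle ∠0xy at x exceeds γ; in particular x ∈ C_β(0,y), and hence {0,y} is not an edge of the β-skeleton of any locally finite set φ ⊆ ℝ² containing 0, x, and y. -/

import Mathlib

open Metric Set
open scoped RealInnerProductSpace

def Cbeta (β : ℝ) (x y : EuclideanSpace ℝ (Fin 2)) : Set (EuclideanSpace ℝ (Fin 2)) :=
  {z | ∃ M : EuclideanSpace ℝ (Fin 2),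
    dist M x = β * dist x y / 2 ∧ dist M y = β * dist x y / 2 ∧ dist z M ≤ β * dist x y / 2}

def IsSkelEdge (β : ℝ) (φ : Set (EuclideanSpace ℝ (Fin 2)))
    (x y : EuclideanSpace ℝ (Fin 2)) : Prop :=
  x ∈ φ ∧ y ∈ φ ∧ x ≠ y ∧ Cbeta β x y ∩ φ ⊆ {x, y}

private lemma key_ineq (A d P b : ℝ) (hb : 1 < b) (hA : 0 < A) (hAd : A ≤ d)
    (hP1 : (2 - b^2)*(A*d) < b^2*P) (hP2 : P < A^2) :
    b^2*P^2 + A^2*(d^2 - 2*P + A^2) < b^2*(A^2*d^2) := by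
  nlinarith [mul_pos (show 0 < b^2*P - (2-b^2)*(A*d) by linarith)
      (show 0 < A*d - P by nlinarith),
    mul_nonneg (mul_nonneg hA.le (sub_nonneg.mpr hAd))
      (show 0 ≤ (A^2-P) + (A*d-P) by nlinarith)]

private lemma gap1 (A d P b : ℝ) (hb : 1 < b) (hA : 0 < A) (hAd : A ≤ d)
    (hP1 : (2 - b^2)*(A*d) < b^2*P) (hP2 : P < A^2) :
    (A^2 - P)^2 < (1 - (1/b)^2) * (A^2*(d^2 - 2*P + A^2)) := by
  have hb2 : (0:ℝ) < b^2 := by positivity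
  have h1 : b^2*(A^2 - P)^2 < (b^2 - 1)*(A^2*(d^2 - 2*P + A^2)) := by
    nlinarith [key_ineq A d P b hb hA hAd hP1 hP2]
  have h2 : (1 - (1/b)^2) * (A^2*(d^2 - 2*P + A^2))
      = (b^2 - 1)*(A^2*(d^2 - 2*P + A^2))/b^2 := by
    field_simp
  rw [h2, lt_div_iff₀ hb2]
  linarith [h1]

private lemma gap2 (A d P q b : ℝ) (hb : 1 < b) (hA : 0 < A) (hAd : A ≤ d)
    (hP1 : (2 - b^2)*(A*d) < b^2*P) (hP2 : P < A^2) (hq : P^2 + q^2 = A^2*d^2) :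
    (A^2 - P)^2 < (b^2 - 1)*q^2 := by
  have hq' : q^2 = A^2*d^2 - P^2 := by linarith
  rw [hq']
  nlinarith [key_ineq A d P b hb hA hAd hP1 hP2]

private lemma norm_comb (y w : EuclideanSpace ℝ (Fin 2)) (a b : ℝ) (h : ⟪y, w⟫ = 0) :
    ‖a • y + b • w‖^2 = a^2*‖y‖^2 + b^2*‖w‖^2 := by
  have h' : ⟪w, y⟫ = 0 := by rw [real_inner_comm]; exact h
  rw [← real_inner_self_eq_norm_sq, ← real_inner_self_eq_norm_sq, ← real_inner_self_eq_norm_sq]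
  simp only [real_inner_add_add_self, real_inner_smul_left, real_inner_smul_right, h, h',
    mul_zero, add_zero]
  ring

set_option maxHeartbeats 2000000 in
theorem stmt7 (β : ℝ) (hβ : 1 < β) (θ₀ : ℝ) (hθ₀ : 0 < θ₀)
    (hθ₁ : θ₀ < Real.pi - 2 * Real.arcsin (1 / β))
    (x y : EuclideanSpace ℝ (Fin 2)) (hx : x ≠ 0) (hy : y ≠ 0) (hxy : x ≠ y)
    (hle : dist (0 : EuclideanSpace ℝ (Fin 2)) x ≤ dist (0 : EuclideanSpace ℝ (Fin 2)) y)
    (hang : EuclideanGeometry.angle x (0 : EuclideanSpace ℝ (Fin 2)) y ≤ θ₀) :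
    Real.arcsin (1 / β) < EuclideanGeometry.angle (0 : EuclideanSpace ℝ (Fin 2)) x y ∧
    x ∈ Cbeta β 0 y ∧
    ∀ φ : Set (EuclideanSpace ℝ (Fin 2)), (∀ r : ℝ, (φ ∩ closedBall 0 r).Finite) →
      (0 : EuclideanSpace ℝ (Fin 2)) ∈ φ → x ∈ φ → y ∈ φ → ¬ IsSkelEdge β φ 0 y := by
  have hβ0 : (0:ℝ) < β := by linarith
  have hs0 : (0:ℝ) < 1/β := by positivity
  have hs1 : 1/β < 1 := by rw [div_lt_one hβ0]; exact hβ
  have hγ0 : 0 ≤ Real.arcsin (1/β) := Real.arcsin_nonneg.mpr hs0.le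
  have hγpi2 : Real.arcsin (1/β) ≤ Real.pi / 2 := Real.arcsin_le_pi_div_two _
  have hsin : Real.sin (Real.arcsin (1/β)) = 1/β := Real.sin_arcsin (by linarith) (by linarith)
  have hπ := Real.pi_pos
  have hA0 : (0:ℝ) < ‖x‖ := norm_pos_iff.mpr hx
  have hd0 : (0:ℝ) < ‖y‖ := norm_pos_iff.mpr hy
  have hB0 : (0:ℝ) < ‖y - x‖ := by
    rw [norm_pos_iff]; exact sub_ne_zero.mpr (Ne.symm hxy)
  have hled : ‖x‖ ≤ ‖y‖ := by
    have h1 : dist (0 : EuclideanSpace ℝ (Fin 2)) x = ‖x‖ := by simp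
    have h2 : dist (0 : EuclideanSpace ℝ (Fin 2)) y = ‖y‖ := by simp
    rw [h1, h2] at hle; exact hle
  -- the angle at the origin: cosine bound
  have hcosα : Real.cos (EuclideanGeometry.angle x (0 : EuclideanSpace ℝ (Fin 2)) y)
      = ⟪x, y⟫ / (‖x‖ * ‖y‖) := by
    have h : EuclideanGeometry.angle x (0 : EuclideanSpace ℝ (Fin 2)) y
        = InnerProductGeometry.angle x y := by
      unfold EuclideanGeometry.angle
      rw [vsub_eq_sub, vsub_eq_sub, sub_zero, sub_zero]
    rw [h, InnerProductGeometry.cos_angle]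
  have hcoslb : Real.cos (Real.pi - 2 * Real.arcsin (1/β))
      < Real.cos (EuclideanGeometry.angle x (0 : EuclideanSpace ℝ (Fin 2)) y) := by
    apply Real.strictAntiOn_cos
    · constructor
      · exact EuclideanGeometry.angle_nonneg _ _ _
      · exact EuclideanGeometry.angle_le_pi _ _ _
    · constructor <;> [linarith; linarith]
    · linarith
  have hcosval : Real.cos (Real.pi - 2 * Real.arcsin (1/β)) = 2*(1/β)^2 - 1 := by
    rw [Real.cos_pi_sub, Real.cos_two_mul, Real.cos_sq', hsin]; ring
  have hP1 : (2 - β^2) * (‖x‖*‖y‖) < β^2 * ⟪x, y⟫ := by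
    rw [hcosval, hcosα] at hcoslb
    have h := (lt_div_iff₀ (by positivity : (0:ℝ) < ‖x‖*‖y‖)).mp hcoslb
    have hb2 : (0:ℝ) < β^2 := by positivity
    have := (mul_lt_mul_iff_right₀ hb2).mpr h
    calc (2 - β^2) * (‖x‖*‖y‖) = β^2 * ((2*(1/β)^2 - 1) * (‖x‖*‖y‖)) := by
          field_simp
      _ < β^2 * ⟪x, y⟫ := this
  have hB2 : ‖y - x‖^2 = ‖y‖^2 - 2*⟪x, y⟫ + ‖x‖^2 := by
    rw [norm_sub_sq_real, real_inner_comm]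
  -- main inequality at x, in two forms
  have hkeyres : ⟪x, y⟫ < ‖x‖^2 →
      β^2*⟪x, y⟫^2 + ‖x‖^2*(‖y‖^2 - 2*⟪x, y⟫ + ‖x‖^2) < β^2*(‖x‖^2*‖y‖^2) :=
    fun h => key_ineq ‖x‖ ‖y‖ ⟪x, y⟫ β hβ hA0 hled hP1 h
  have hslt : (1/β)^2 < 1 := by
    calc (1/β)^2 < 1^2 := by
          apply pow_lt_pow_left₀ hs1 hs0.le
          norm_num
      _ = 1 := one_pow 2
  have hc0 : (0:ℝ) < Real.sqrt (1 - (1/β)^2) := Real.sqrt_pos.mpr (by linarith)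
  have hc2 : Real.sqrt (1 - (1/β)^2)^2 = 1 - (1/β)^2 := Real.sq_sqrt (by linarith)
  have hmain : ‖x‖^2 - ⟪x, y⟫ < Real.sqrt (1 - (1/β)^2) * (‖x‖ * ‖y - x‖) := by
    rcases lt_or_ge ⟪x, y⟫ (‖x‖^2) with h | h
    · have hk := hkeyres h
      have h2 : (‖x‖^2 - ⟪x, y⟫)^2 < (Real.sqrt (1 - (1/β)^2) * (‖x‖ * ‖y - x‖))^2 := by
        rw [mul_pow, hc2, mul_pow, hB2]
        exact gap1 ‖x‖ ‖y‖ ⟪x, y⟫ β hβ hA0 hled hP1 h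
      exact lt_of_pow_lt_pow_left₀ 2 (by positivity) h2
    · have : (0:ℝ) < Real.sqrt (1 - (1/β)^2) * (‖x‖ * ‖y - x‖) := by positivity
      linarith
  -- Goal 1
  have hcosθ : Real.cos (EuclideanGeometry.angle (0 : EuclideanSpace ℝ (Fin 2)) x y)
      = (‖x‖^2 - ⟪x, y⟫) / (‖x‖ * ‖y - x‖) := by
    have h : EuclideanGeometry.angle (0 : EuclideanSpace ℝ (Fin 2)) x y
        = InnerProductGeometry.angle (-x) (y - x) := by
      unfold EuclideanGeometry.angle
      rw [vsub_eq_sub, vsub_eq_sub, zero_sub]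
    rw [h, InnerProductGeometry.cos_angle, norm_neg]
    congr 1
    rw [inner_neg_left, inner_sub_right, real_inner_self_eq_norm_sq]
    ring
  have goal1 : Real.arcsin (1/β) < EuclideanGeometry.angle (0 : EuclideanSpace ℝ (Fin 2)) x y := by
    have hclt : Real.cos (EuclideanGeometry.angle (0 : EuclideanSpace ℝ (Fin 2)) x y)
        < Real.cos (Real.arcsin (1/β)) := by
      rw [hcosθ, Real.cos_arcsin, div_lt_iff₀ (by positivity)]
      exact hmain
    have := Real.strictAntiOn_cos.lt_iff_gt
      (⟨EuclideanGeometry.angle_nonneg _ _ _, EuclideanGeometry.angle_le_pi _ _ _⟩ :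
        EuclideanGeometry.angle (0 : EuclideanSpace ℝ (Fin 2)) x y ∈ Set.Icc 0 Real.pi)
      (⟨hγ0, by linarith⟩ : Real.arcsin (1/β) ∈ Set.Icc 0 Real.pi)
    exact this.mp hclt
  -- Goal 2 : membership in Cbeta
  have hxmem : x ∈ Cbeta β 0 y := by
    -- perpendicular vector
    set w₀ : EuclideanSpace ℝ (Fin 2) := (WithLp.equiv 2 (Fin 2 → ℝ)).symm ![-(y 1), y 0]
      with hw₀
    have hw00 : w₀ 0 = -(y 1) := by rw [hw₀]; simp [WithLp.equiv_symm_apply, PiLp.toLp_apply]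
    have hw01 : w₀ 1 = y 0 := by rw [hw₀]; simp [WithLp.equiv_symm_apply, PiLp.toLp_apply]
    have hinner : ∀ u v : EuclideanSpace ℝ (Fin 2), ⟪u, v⟫ = u 0 * v 0 + u 1 * v 1 := by
      intro u v
      simp [PiLp.inner_apply, RCLike.inner_apply, Fin.sum_univ_two, mul_comm]
    have hiwy : ⟪y, w₀⟫ = 0 := by rw [hinner, hw00, hw01]; ring
    have hnw : ‖w₀‖^2 = ‖y‖^2 := by
      rw [← real_inner_self_eq_norm_sq, ← real_inner_self_eq_norm_sq, hinner, hinner,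
        hw00, hw01]; ring
    have hLag : ⟪x, y⟫^2 + ⟪x, w₀⟫^2 = ‖x‖^2 * ‖y‖^2 := by
      rw [← real_inner_self_eq_norm_sq x, ← real_inner_self_eq_norm_sq y,
        hinner x y, hinner x w₀, hinner x x, hinner y y, hw00, hw01]
      ring
    obtain ⟨w, hwy, hnw2, hq0, hqsq⟩ : ∃ w : EuclideanSpace ℝ (Fin 2),
        ⟪y, w⟫ = 0 ∧ ‖w‖^2 = ‖y‖^2 ∧ 0 ≤ ⟪x, w⟫ ∧ ⟪x, y⟫^2 + ⟪x, w⟫^2 = ‖x‖^2 * ‖y‖^2 := by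
      rcases le_total 0 ⟪x, w₀⟫ with h | h
      · exact ⟨w₀, hiwy, hnw, h, hLag⟩
      · refine ⟨-w₀, by rw [inner_neg_right, hiwy]; ring, by rw [norm_neg]; exact hnw,
          by rw [inner_neg_right]; linarith, by rw [inner_neg_right]; linear_combination hLag⟩
    set k : ℝ := Real.sqrt (β^2 - 1) with hk
    have hk0 : 0 ≤ k := Real.sqrt_nonneg _
    have hb21 : (1:ℝ) ≤ β^2 := by
      calc (1:ℝ) = 1^2 := (one_pow 2).symm
        _ ≤ β^2 := by apply pow_le_pow_left₀ (by norm_num) hβ.le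
    have hk2 : k^2 = β^2 - 1 := Real.sq_sqrt (by linarith)
    set M : EuclideanSpace ℝ (Fin 2) := (2⁻¹ : ℝ) • y + (k/2) • w with hM
    have hMn : ‖M‖^2 = (β * ‖y‖ / 2)^2 := by
      rw [hM, norm_comb y w _ _ hwy, hnw2]
      linear_combination (‖y‖^2/4) * hk2
    have hMyn : ‖M - y‖^2 = (β * ‖y‖ / 2)^2 := by
      have h1 : M - y = (-(2⁻¹) : ℝ) • y + (k/2) • w := by rw [hM]; module
      rw [h1, norm_comb y w _ _ hwy, hnw2]
      linear_combination (‖y‖^2/4) * hk2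
    have hR0 : (0:ℝ) ≤ β * ‖y‖ / 2 := by positivity
    have hdist0y : dist (0 : EuclideanSpace ℝ (Fin 2)) y = ‖y‖ := by simp
    have hxM : ⟪x, M⟫ = 2⁻¹ * ⟪x, y⟫ + (k/2) * ⟪x, w⟫ := by
      rw [hM, inner_add_right, real_inner_smul_right, real_inner_smul_right]
    -- key inequality for the disk
    have hkq : ‖x‖^2 - ⟪x, y⟫ ≤ k * ⟪x, w⟫ := by
      rcases lt_or_ge ⟪x, y⟫ (‖x‖^2) with h | h
      · have hkr := hkeyres h
        have h3 : (‖x‖^2 - ⟪x, y⟫)^2 < (k * ⟪x, w⟫)^2 := by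
          rw [mul_pow, hk2]
          exact gap2 ‖x‖ ‖y‖ ⟪x, y⟫ ⟪x, w⟫ β hβ hA0 hled hP1 h hqsq
        exact (lt_of_pow_lt_pow_left₀ 2 (mul_nonneg hk0 hq0) h3).le
      · have : (0:ℝ) ≤ k * ⟪x, w⟫ := mul_nonneg hk0 hq0
        linarith
    refine ⟨M, ?_, ?_, ?_⟩
    · rw [dist_zero_right, hdist0y]
      calc ‖M‖ = Real.sqrt (‖M‖^2) := (Real.sqrt_sq (norm_nonneg M)).symm
        _ = Real.sqrt ((β * ‖y‖ / 2)^2) := by rw [hMn]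
        _ = β * ‖y‖ / 2 := Real.sqrt_sq hR0
    · rw [dist_eq_norm, hdist0y]
      calc ‖M - y‖ = Real.sqrt (‖M - y‖^2) := (Real.sqrt_sq (norm_nonneg _)).symm
        _ = Real.sqrt ((β * ‖y‖ / 2)^2) := by rw [hMyn]
        _ = β * ‖y‖ / 2 := Real.sqrt_sq hR0
    · rw [dist_eq_norm, hdist0y]
      have hsq : ‖x - M‖^2 ≤ (β * ‖y‖ / 2)^2 := by
        rw [norm_sub_sq_real, hxM, hMn]
        linarith [hkq]
      calc ‖x - M‖ = Real.sqrt (‖x - M‖^2) := (Real.sqrt_sq (norm_nonneg _)).symm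
        _ ≤ Real.sqrt ((β * ‖y‖ / 2)^2) := Real.sqrt_le_sqrt hsq
        _ = β * ‖y‖ / 2 := Real.sqrt_sq hR0
  refine ⟨goal1, hxmem, ?_⟩
  intro φ _ h0 hxφ hyφ hedge
  have hmem := hedge.2.2.2 ⟨hxmem, hxφ⟩
  simp only [Set.mem_insert_iff, Set.mem_singleton_iff] at hmem
  rcases hmem with h | h
  · exact hx h
  · exact hxy h
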